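/- If n, m ≥ 0 with n + m ≥ 2, then any support w(p_1,…,p_{n+m-1}) ∈ AP_{n+m} factors uniquely as w = w' · u · w'' where w' = w(p_1,…,p_{n-1}) ∈ AP_n, w'' = w^{op}(q^{n+1},…,q^{n+m-1}) ∈ AP_m^{op}, and u is a path in Q. Moreover p_n = a·u·b and q^n = a'·u·b' with a, a', b, b' nontrivial paths, so in particular u does not belong to I. -/

import Mathlib

/-!
Common framework for formalizing "Hochschild cohomology of triangular string
algebras and its ring structure" (Redondo–Román).

* Interval combinatorics model of Bardzell's `n`-concatenations along a directed
  path (a directed path is modelled by the line `ℕ`, a subpath by an interval,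
  and a relation by the interval it occupies).
* A combinatorial model of a bound quiver `(Q, I)` with `I` a monomial ideal
  generated by a reduced set `R` of paths: paths are nonempty composable lists
  of arrows, `AP_n` is the set of supports of `n`-concatenations, `𝒫` is the
  basis of `A = kQ/I` given by the paths not in `I`.
* The Hochschild complex `Hom_{E-E}(kAP_n, A) ≅ k(AP_n ∥ 𝒫)` of a (triangular)
  monomial algebra obtained from Bardzell's minimal resolution, with its
  differentials `F_n` realized as explicit matrices, and the Hochschild
  cohomology `HH^n(A)` defined as the cohomology of this complex (for monomial
  algebras this complex computes Hochschild cohomology, by Bardzell's theorem).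
-/

attribute [local instance] Classical.propDecidable

noncomputable section

namespace Paper

/-! ### Interval model of concatenations along a directed path -/

/-- An interval `(s, t)` on the line `ℕ`: the model of a subpath of a fixed
directed path `T`, going from vertex `s` to vertex `t`. -/
abbrev Iv := ℕ × ℕ

/-- `R` is a reduced set of relations along a directed path: every relation is a
path of length at least two, and no relation divides another one. -/
structure RelSet (R : Set Iv) : Prop where
  len : ∀ r ∈ R, r.1 + 2 ≤ r.2
  nodiv : ∀ r ∈ R, ∀ r' ∈ R, r.1 ≤ r'.1 → r'.2 ≤ r.2 → r = r'

/-- The window from which the `(i+1)`-st relation (0-based index `i ≥ 1`) of a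
concatenation is chosen: `L_1 = {p ∈ R : s(p_1) < s(p) < t(p_1)}` and
`L_{j+1} = {p ∈ R : t(p_{j-1}) ≤ s(p) < t(p_j)}`. -/
def cWindow (R : Set Iv) (p : ℕ → Iv) (i : ℕ) : Set Iv :=
  if i = 1 then {q | q ∈ R ∧ (p 0).1 < q.1 ∧ q.1 < (p 0).2}
  else {q | q ∈ R ∧ (p (i - 2)).2 ≤ q.1 ∧ q.1 < (p (i - 1)).2}

/-- `IsConcat R k p` : the relations `p 0, p 1, …, p (k-1)` form a
`(k+1)`-concatenation `(p_1, …, p_k)` in Bardzell's sense: each `p i` (for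
`1 ≤ i < k`) is a relation of the corresponding window with minimal source. -/
def IsConcat (R : Set Iv) (k : ℕ) (p : ℕ → Iv) : Prop :=
  p 0 ∈ R ∧ ∀ i, 1 ≤ i → i < k →
    (p i ∈ cWindow R p i ∧ ∀ q ∈ cWindow R p i, (p i).1 ≤ q.1)

/-- The dual window: `L_1^{op} = {q ∈ R : s(q_1) < t(q) < t(q_1)}` and
`L_{j+1}^{op} = {q ∈ R : s(q_j) < t(q) ≤ s(q_{j-1})}`. -/
def oWindow (R : Set Iv) (q : ℕ → Iv) (i : ℕ) : Set Iv :=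
  if i = 1 then {r | r ∈ R ∧ (q 0).1 < r.2 ∧ r.2 < (q 0).2}
  else {r | r ∈ R ∧ (q (i - 1)).1 < r.2 ∧ r.2 ≤ (q (i - 2)).1}

/-- `IsOpConcat R k q` : the relations `q 0, …, q (k-1)` form a
`(k+1)`-op-concatenation `(q_{k}, …, q_1)` (so `q 0 = q_k` is built first and
`q^j = q (k - j)` in the paper's upper-index notation): each `q i` (for
`1 ≤ i < k`) is a relation of the corresponding dual window with maximal
target. -/
def IsOpConcat (R : Set Iv) (k : ℕ) (q : ℕ → Iv) : Prop :=
  q 0 ∈ R ∧ ∀ i, 1 ≤ i → i < k →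
    (q i ∈ oWindow R q i ∧ ∀ r ∈ oWindow R q i, r.2 ≤ (q i).2)

/-- `IsSupport R n w` : the interval `w` is the support of an
`n`-concatenation (for `n = 0` a vertex, for `n = 1` an arrow). -/
def IsSupport (R : Set Iv) : ℕ → Iv → Prop
  | 0, w => w.2 = w.1
  | 1, w => w.2 = w.1 + 1
  | (n + 2), w => ∃ p : ℕ → Iv, IsConcat R (n + 1) p ∧ (p 0).1 = w.1 ∧ (p n).2 = w.2

/-- `IsOpSupport R n w` : the interval `w` is the support of an
`n`-op-concatenation. -/
def IsOpSupport (R : Set Iv) : ℕ → Iv → Prop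
  | 0, w => w.2 = w.1
  | 1, w => w.2 = w.1 + 1
  | (n + 2), w => ∃ q : ℕ → Iv, IsOpConcat R (n + 1) q ∧ (q n).1 = w.1 ∧ (q 0).2 = w.2

/-! ### The combinatorial model of a monomial (string) bound quiver -/

/-- A finite quiver, given by raw data. -/
structure QuivData where
  V : Type
  E : Type
  src : E → V
  tgt : E → V

variable (Q : QuivData)

/-- A (nontrivial) path in `Q`: a nonempty composable list of arrows. -/
def IsPathL (l : List Q.E) : Prop :=
  l ≠ [] ∧ l.Chain' fun a b => Q.tgt a = Q.src b

/-- The source vertex of a nonempty list of arrows (as an `Option`). -/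
def psrc (l : List Q.E) : Option Q.V := l.head?.map Q.src

/-- The target vertex of a nonempty list of arrows (as an `Option`). -/
def ptgt (l : List Q.E) : Option Q.V := l.getLast?.map Q.tgt

/-- `l` lies in the (monomial) ideal `I = ⟨R⟩`: some relation divides `l`. -/
def inI (R : Set (List Q.E)) (l : List Q.E) : Prop := ∃ r ∈ R, r <:+: l

/-- `l` belongs to the canonical basis `𝒫` of `A = kQ/I`: a nontrivial path
not in `I`.  (Trivial paths `e_x` are treated separately.) -/
def isP (R : Set (List Q.E)) (l : List Q.E) : Prop := IsPathL Q l ∧ ¬ inI Q R l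

/-- `(Q, R)` presents a **triangular string algebra**: relations are paths of
length `≥ 2`, form a reduced (minimal) generating set, the string conditions
S1), S2) hold, and `Q` has no oriented cycles. -/
structure StringData (R : Set (List Q.E)) : Prop where
  relPath : ∀ r ∈ R, IsPathL Q r ∧ 2 ≤ r.length
  relMin : ∀ r ∈ R, ∀ r' ∈ R, r' <:+: r → r' = r
  srcTwo : ∀ v : Q.V, ∀ a b c : Q.E, Q.src a = v → Q.src b = v → Q.src c = v →
    a = b ∨ a = c ∨ b = c
  tgtTwo : ∀ v : Q.V, ∀ a b c : Q.E, Q.tgt a = v → Q.tgt b = v → Q.tgt c = v →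
    a = b ∨ a = c ∨ b = c
  uniqRight : ∀ a b c : Q.E, Q.tgt a = Q.src b → Q.tgt a = Q.src c →
    [a, b] ∉ R → [a, c] ∉ R → b = c
  uniqLeft : ∀ a b c : Q.E, Q.tgt b = Q.src a → Q.tgt c = Q.src a →
    [b, a] ∉ R → [c, a] ∉ R → b = c
  triangular : ∀ l : List Q.E, IsPathL Q l → psrc Q l ≠ ptgt Q l

/-- The subpath of `l` occupying the positions `[c.1, c.2)`. -/
def slice (l : List Q.E) (c : Iv) : List Q.E := (l.drop c.1).take (c.2 - c.1)

/-- The intervals of positions of `w` occupied by relations of `R`. -/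
def relIvs (R : Set (List Q.E)) (w : List Q.E) : Set Iv :=
  {c | c.1 < c.2 ∧ c.2 ≤ w.length ∧ slice Q w c ∈ R}

/-- `w ∈ AP_n` : `w` is the support of an `n`-concatenation of relations of
`R` (for `n = 1`, an arrow; the vertices `AP_0` are treated separately). -/
def IsAP (R : Set (List Q.E)) : ℕ → List Q.E → Prop
  | 0, _ => False
  | 1, w => IsPathL Q w ∧ w.length = 1
  | (n + 2), w => IsPathL Q w ∧ IsSupport (relIvs Q R w) (n + 2) (0, w.length)

/-- `w ∈ AP_n^{op}` : `w` is the support of an `n`-op-concatenation. -/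
def IsAPop (R : Set (List Q.E)) : ℕ → List Q.E → Prop
  | 0, _ => False
  | 1, w => IsPathL Q w ∧ w.length = 1
  | (n + 2), w => IsPathL Q w ∧ IsOpSupport (relIvs Q R w) (n + 2) (0, w.length)

/-- A pair of parallel paths. -/
abbrev Pr := List Q.E × List Q.E

/-- The set `(AP_n ∥ 𝒫)` of pairs `(ρ, γ)` with `ρ ∈ AP_n`, `γ ∈ 𝒫` and
`ρ, γ` parallel; it indexes a basis of `Hom_{E-E}(kAP_n, A)`. -/
def PairSet (R : Set (List Q.E)) (n : ℕ) : Set (Pr Q) :=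
  {x | IsAP Q R n x.1 ∧ isP Q R x.2 ∧ psrc Q x.1 = psrc Q x.2 ∧ ptgt Q x.1 = ptgt Q x.2}

/-- `ρ` and `γ` have the same first arrow. -/
def sharesFirst (x : Pr Q) : Prop := x.1.head? = x.2.head?

/-- `ρ` and `γ` have the same last arrow. -/
def sharesLast (x : Pr Q) : Prop := x.1.getLast? = x.2.getLast?

/-- The class `(0,0)_n`. -/
def cls00 (R : Set (List Q.E)) (n : ℕ) : Set (Pr Q) :=
  {x ∈ PairSet Q R n | ¬ sharesFirst Q x ∧ ¬ sharesLast Q x}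

/-- The class `(1,0)_n`. -/
def cls10 (R : Set (List Q.E)) (n : ℕ) : Set (Pr Q) :=
  {x ∈ PairSet Q R n | sharesFirst Q x ∧ ¬ sharesLast Q x}

/-- The class `(0,1)_n`. -/
def cls01 (R : Set (List Q.E)) (n : ℕ) : Set (Pr Q) :=
  {x ∈ PairSet Q R n | ¬ sharesFirst Q x ∧ sharesLast Q x}

/-- The class `(1,1)_n`. -/
def cls11 (R : Set (List Q.E)) (n : ℕ) : Set (Pr Q) :=
  {x ∈ PairSet Q R n | sharesFirst Q x ∧ sharesLast Q x}

/-- `Q_1 · γ ⊆ I` (left decoration `⁻`). -/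
def leftI (R : Set (List Q.E)) (γ : List Q.E) : Prop :=
  ∀ b : Q.E, some (Q.tgt b) = psrc Q γ → inI Q R (b :: γ)

/-- `γ · Q_1 ⊆ I` (right decoration `⁻`). -/
def rightI (R : Set (List Q.E)) (γ : List Q.E) : Prop :=
  ∀ b : Q.E, some (Q.src b) = ptgt Q γ → inI Q R (γ ++ [b])

/-- `Q_1 · γ̂ ⊆ I` where `γ = γ̂ α₂`, i.e. `γ̂ = γ.dropLast`. -/
def leftIHat (R : Set (List Q.E)) (γ : List Q.E) : Prop :=
  ∀ b : Q.E, some (Q.tgt b) = psrc Q γ → inI Q R (b :: γ.dropLast)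

/-- `γ̂ · Q_1 ⊆ I` where `γ = α₁ γ̂`, i.e. `γ̂ = γ.tail`. -/
def rightIHat (R : Set (List Q.E)) (γ : List Q.E) : Prop :=
  ∀ b : Q.E, some (Q.src b) = ptgt Q γ → inI Q R (γ.tail ++ [b])

/-- `⁻(0,0)⁻_n`. -/
def mm00 (R : Set (List Q.E)) (n : ℕ) : Set (Pr Q) :=
  {x ∈ cls00 Q R n | leftI Q R x.2 ∧ rightI Q R x.2}

/-- `⁻(0,1)_n`. -/
def m01 (R : Set (List Q.E)) (n : ℕ) : Set (Pr Q) :=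
  {x ∈ cls01 Q R n | leftI Q R x.2}

/-- `⁺⁻(0,1)_n`. -/
def pm01 (R : Set (List Q.E)) (n : ℕ) : Set (Pr Q) :=
  {x ∈ cls01 Q R n | leftI Q R x.2 ∧ ¬ leftIHat Q R x.2}

/-- `⁻⁻(0,1)_n`. -/
def mm01 (R : Set (List Q.E)) (n : ℕ) : Set (Pr Q) :=
  {x ∈ cls01 Q R n | leftI Q R x.2 ∧ leftIHat Q R x.2}

/-- `(1,0)_n⁻`. -/
def m10 (R : Set (List Q.E)) (n : ℕ) : Set (Pr Q) :=
  {x ∈ cls10 Q R n | rightI Q R x.2}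

/-! ### The Hochschild complex obtained from Bardzell's resolution -/

variable (k : Type) [Field k]

/-- The `(y, x)` matrix entry of the differential `F_n` of the Hochschild
complex: for `x = (w, γ) ∈ (AP_n ∥ 𝒫)` and `y = (ψ, γ') ∈ (AP_{n-1} ∥ 𝒫)`, the
signed number of ways of dividing `w = L(ψ) ψ R(ψ)` (with `L, R` not both
trivial) so that `γ = L(ψ) γ' R(ψ)`; the sign is `(-1)^n` for the division
with trivial `L(ψ)` (this reproduces `F_{2m}` and `F_{2m+1}` of the paper). -/
def coeffF (R : Set (List Q.E)) (n : ℕ) (y x : Pr Q) : k :=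
  ∑ᶠ c : Iv,
    if c.1 < c.2 ∧ c.2 ≤ x.1.length ∧ ¬(c.1 = 0 ∧ c.2 = x.1.length) ∧
        y.1 = slice Q x.1 c ∧ x.2 = x.1.take c.1 ++ y.2 ++ x.1.drop c.2 then
      (if c.1 = 0 then (-1 : k) ^ n else 1)
    else 0

/-- The differential `F_n : Hom_{E-E}(kAP_{n-1}, A) → Hom_{E-E}(kAP_n, A)`
(`n ≥ 2`), in the bases `(AP_{n-1} ∥ 𝒫)`, `(AP_n ∥ 𝒫)`. -/
def F (R : Set (List Q.E)) (n : ℕ) [Fintype ↥(PairSet Q R (n - 1))] :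
    (↥(PairSet Q R (n - 1)) → k) →ₗ[k] (↥(PairSet Q R n) → k) :=
  Matrix.mulVecLin (Matrix.of fun x y => coeffF Q k R n y.val x.val)

/-- The differential `F_1 : Hom_{E-E}(kAP_0, A) → Hom_{E-E}(kAP_1, A)`; for a
triangular algebra `Hom_{E-E}(kAP_0, A) ≅ kQ_0`. -/
def F1 (R : Set (List Q.E)) [Fintype Q.V] [Fintype ↥(PairSet Q R 1)] :
    (Q.V → k) →ₗ[k] (↥(PairSet Q R 1) → k) :=
  Matrix.mulVecLin (Matrix.of fun x v =>
    if x.val.2 = x.val.1 then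
      (if ptgt Q x.val.1 = some v then (1 : k) else 0) -
        (if psrc Q x.val.1 = some v then (1 : k) else 0)
    else 0)

/-- `HH^0(A) = Ker F_1`. -/
abbrev HH0 (R : Set (List Q.E)) [Fintype Q.V] [Fintype ↥(PairSet Q R 1)] :=
  ↥(LinearMap.ker (F1 Q k R))

/-- `HH^1(A) = Ker F_2 / Im F_1`. -/
abbrev HH1 (R : Set (List Q.E)) [Fintype Q.V] [∀ j, Fintype ↥(PairSet Q R j)] :=
  ↥(LinearMap.ker (F Q k R 2)) ⧸
    Submodule.comap (LinearMap.ker (F Q k R 2)).subtype (LinearMap.range (F1 Q k R))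

/-- `HH^n(A) = Ker F_{n+1} / Im F_n` for `n ≥ 2`. -/
abbrev HHn (R : Set (List Q.E)) (n : ℕ) [∀ j, Fintype ↥(PairSet Q R j)] :=
  ↥(LinearMap.ker (F Q k R (n + 1))) ⧸
    Submodule.comap (LinearMap.ker (F Q k R (n + 1))).subtype (LinearMap.range (F Q k R n))

/-- The underlying graph of `Q` is connected. -/
def connectedQ : Prop :=
  (SimpleGraph.fromRel fun u v => ∃ a : Q.E, Q.src a = u ∧ Q.tgt a = v).Connected

/-- The underlying graph of the finite quiver `Q` is a tree (connected with
`|Q_1| = |Q_0| - 1`). -/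
def IsTreeQuiv [Fintype Q.V] [Fintype Q.E] : Prop :=
  connectedQ Q ∧ Fintype.card Q.E + 1 = Fintype.card Q.V

/-- A monomial algebra is simply connected iff its quiver is a tree; we use
this characterization as the definition of simple connectedness. -/
def SimplyConnected [Fintype Q.V] [Fintype Q.E] : Prop := IsTreeQuiv Q




/-! ### Auxiliary lemmas for Statement 1 -/

section Statement1Aux

variable {R : Set Iv}

/-- Two relations are never strictly nested: `R` is totally ordered. -/
lemma RelSet.src_le_of_tgt_le (hR : RelSet R) {r r' : Iv} (hr : r ∈ R) (hr' : r' ∈ R)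
    (h : r.2 ≤ r'.2) : r.1 ≤ r'.1 := by
  by_contra h'
  push_neg at h'
  have e := hR.nodiv r' hr' r hr (le_of_lt h') h
  rw [e] at h'
  exact lt_irrefl _ h'

lemma RelSet.src_lt_of_tgt_lt (hR : RelSet R) {r r' : Iv} (hr : r ∈ R) (hr' : r' ∈ R)
    (h : r.2 < r'.2) : r.1 < r'.1 := by
  by_contra h'
  push_neg at h'
  have e := hR.nodiv r' hr' r hr h' (le_of_lt h)
  rw [e] at h
  exact lt_irrefl _ h

lemma RelSet.tgt_lt_of_src_lt (hR : RelSet R) {r r' : Iv} (hr : r ∈ R) (hr' : r' ∈ R)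
    (h : r.1 < r'.1) : r.2 < r'.2 := by
  by_contra h'
  push_neg at h'
  exact absurd (hR.src_le_of_tgt_le hr' hr h') (by omega)

lemma RelSet.src_inj (hR : RelSet R) {r r' : Iv} (hr : r ∈ R) (hr' : r' ∈ R)
    (h : r.1 = r'.1) : r = r' := by
  rcases le_total r.2 r'.2 with h2 | h2
  · exact (hR.nodiv r' hr' r hr (le_of_eq h.symm) h2).symm
  · exact hR.nodiv r hr r' hr' (le_of_eq h) h2

lemma RelSet.tgt_inj (hR : RelSet R) {r r' : Iv} (hr : r ∈ R) (hr' : r' ∈ R)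
    (h : r.2 = r'.2) : r = r' := by
  rcases le_total r.1 r'.1 with h1 | h1
  · exact hR.nodiv r hr r' hr' h1 (le_of_eq h.symm)
  · exact (hR.nodiv r' hr' r hr h1 (le_of_eq h)).symm

variable {k : ℕ} {p : ℕ → Iv}

lemma IsConcat.mem (hp : IsConcat R k p) {i : ℕ} (hi : i < k) : p i ∈ R := by
  rcases Nat.eq_zero_or_pos i with rfl | h1
  · exact hp.1
  · have h := (hp.2 i h1 hi).1
    unfold cWindow at h
    split_ifs at h with h'
    · exact h.1
    · exact h.1

/-- `s(p_{i+1}) < t(p_i)`. -/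
lemma IsConcat.src_lt_tgt_pred (hp : IsConcat R k p) {i : ℕ} (h1 : 1 ≤ i) (hi : i < k) :
    (p i).1 < (p (i - 1)).2 := by
  have h := (hp.2 i h1 hi).1
  unfold cWindow at h
  split_ifs at h with h'
  · subst h'; exact h.2.2
  · exact h.2.2

/-- `t(p_{i-1}) ≤ s(p_{i+1})`. -/
lemma IsConcat.tgt_pred2_le (hp : IsConcat R k p) {i : ℕ} (h2 : 2 ≤ i) (hi : i < k) :
    (p (i - 2)).2 ≤ (p i).1 := by
  have h := (hp.2 i (by omega) hi).1
  unfold cWindow at h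
  rw [if_neg (by omega)] at h
  exact h.2.1

lemma IsConcat.src0_lt (hp : IsConcat R k p) (hk : 1 < k) : (p 0).1 < (p 1).1 := by
  have h := (hp.2 1 le_rfl hk).1
  unfold cWindow at h
  rw [if_pos rfl] at h
  exact h.2.1

lemma IsConcat.src_succ_lt (hp : IsConcat R k p) {i : ℕ} (hi : i + 1 < k) :
    (p i).1 < (p (i + 1)).1 := by
  rcases Nat.eq_zero_or_pos i with rfl | h1
  · exact hp.src0_lt hi
  · have h := hp.tgt_pred2_le (i := i + 1) (by omega) hi
    have h' := hp.src_lt_tgt_pred (i := i) h1 (by omega)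
    have : i + 1 - 2 = i - 1 := by omega
    rw [this] at h
    omega

lemma IsConcat.tgt_succ_lt (hR : RelSet R) (hp : IsConcat R k p) {i : ℕ} (hi : i + 1 < k) :
    (p i).2 < (p (i + 1)).2 :=
  hR.tgt_lt_of_src_lt (hp.mem (by omega)) (hp.mem hi) (hp.src_succ_lt hi)

lemma IsConcat.tgt_mono (hR : RelSet R) (hp : IsConcat R k p) {i j : ℕ} (hij : i ≤ j)
    (hj : j < k) : (p i).2 ≤ (p j).2 := by
  induction j with
  | zero => simp_all
  | succ j ih =>
    rcases Nat.lt_or_ge i (j + 1) with h | h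
    · exact le_trans (ih (by omega) (by omega)) (le_of_lt (hp.tgt_succ_lt hR hj))
    · have : i = j + 1 := by omega
      rw [this]

lemma IsConcat.restrict (hp : IsConcat R k p) {k' : ℕ} (hk : k' ≤ k) : IsConcat R k' p :=
  ⟨hp.1, fun i h1 h2 => hp.2 i h1 (lt_of_lt_of_le h2 hk)⟩

variable {q : ℕ → Iv}

lemma IsOpConcat.mem (hq : IsOpConcat R k q) {i : ℕ} (hi : i < k) : q i ∈ R := by
  rcases Nat.eq_zero_or_pos i with rfl | h1
  · exact hq.1
  · have h := (hq.2 i h1 hi).1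
    unfold oWindow at h
    split_ifs at h with h'
    · exact h.1
    · exact h.1

lemma IsOpConcat.tgt_gt_src_pred (hq : IsOpConcat R k q) {i : ℕ} (h1 : 1 ≤ i) (hi : i < k) :
    (q (i - 1)).1 < (q i).2 := by
  have h := (hq.2 i h1 hi).1
  unfold oWindow at h
  split_ifs at h with h'
  · subst h'; exact h.2.1
  · exact h.2.1

lemma IsOpConcat.restrict (hq : IsOpConcat R k q) {k' : ℕ} (hk : k' ≤ k) : IsOpConcat R k' q :=
  ⟨hq.1, fun i h1 h2 => hq.2 i h1 (lt_of_lt_of_le h2 hk)⟩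

/-- A concatenation is determined by the source of its first relation. -/
lemma concat_unique (hR : RelSet R) {k₁ k₂ : ℕ} {p₁ p₂ : ℕ → Iv}
    (hp₁ : IsConcat R k₁ p₁) (hp₂ : IsConcat R k₂ p₂) (h0 : (p₁ 0).1 = (p₂ 0).1) :
    ∀ i, i < k₁ → i < k₂ → p₁ i = p₂ i := by
  intro i
  induction i using Nat.strong_induction_on with
  | _ i ih =>
    intro hi₁ hi₂
    rcases Nat.eq_zero_or_pos i with rfl | h1
    · exact hR.src_inj (hp₁.mem hi₁) (hp₂.mem hi₂) h0
    · have hw : cWindow R p₁ i = cWindow R p₂ i := by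
        unfold cWindow
        split_ifs with h'
        · rw [ih 0 h1 (by omega) (by omega)]
        · rw [ih (i - 2) (by omega) (by omega) (by omega), ih (i - 1) (by omega) (by omega)
            (by omega)]
      have m₁ := hp₁.2 i h1 hi₁
      have m₂ := hp₂.2 i h1 hi₂
      rw [hw] at m₁
      exact hR.src_inj (hp₁.mem hi₁) (hp₂.mem hi₂)
        (le_antisymm (m₁.2 _ m₂.1) (m₂.2 _ (hw ▸ m₁.1)))

/-- An op-concatenation is determined by the target of its first relation. -/
lemma opconcat_unique (hR : RelSet R) {k₁ k₂ : ℕ} {q₁ q₂ : ℕ → Iv}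
    (hq₁ : IsOpConcat R k₁ q₁) (hq₂ : IsOpConcat R k₂ q₂) (h0 : (q₁ 0).2 = (q₂ 0).2) :
    ∀ i, i < k₁ → i < k₂ → q₁ i = q₂ i := by
  intro i
  induction i using Nat.strong_induction_on with
  | _ i ih =>
    intro hi₁ hi₂
    rcases Nat.eq_zero_or_pos i with rfl | h1
    · exact hR.tgt_inj (hq₁.mem hi₁) (hq₂.mem hi₂) h0
    · have hw : oWindow R q₁ i = oWindow R q₂ i := by
        unfold oWindow
        split_ifs with h'
        · rw [ih 0 h1 (by omega) (by omega)]
        · rw [ih (i - 2) (by omega) (by omega) (by omega), ih (i - 1) (by omega) (by omega)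
            (by omega)]
      have m₁ := hq₁.2 i h1 hi₁
      have m₂ := hq₂.2 i h1 hi₂
      rw [hw] at m₁
      exact hR.tgt_inj (hq₁.mem hi₁) (hq₂.mem hi₂)
        (le_antisymm (m₂.2 _ (hw ▸ m₁.1)) (m₁.2 _ m₂.1))

/-- Pick an element of maximal target in a set of intervals. -/
noncomputable def pickMax (S : Set Iv) : Iv :=
  if h : ∃ r, r ∈ S ∧ ∀ r' ∈ S, r'.2 ≤ r.2 then h.choose else (0, 0)

lemma pickMax_spec {S : Set Iv} (h : ∃ r, r ∈ S ∧ ∀ r' ∈ S, r'.2 ≤ r.2) :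
    pickMax S ∈ S ∧ ∀ r' ∈ S, r'.2 ≤ (pickMax S).2 := by
  rw [pickMax, dif_pos h]
  exact h.choose_spec

lemma exists_max {S : Set Iv} (hne : S.Nonempty) {B : ℕ} (hbd : ∀ r ∈ S, r.2 ≤ B) :
    ∃ r, r ∈ S ∧ ∀ r' ∈ S, r'.2 ≤ r.2 := by
  have hTne : (Prod.snd '' S).Nonempty := hne.image _
  have hTbd : BddAbove (Prod.snd '' S) := ⟨B, by rintro t ⟨r, hr, rfl⟩; exact hbd r hr⟩
  obtain ⟨r, hr, hrt⟩ := Nat.sSup_mem hTne hTbd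
  exact ⟨r, hr, fun r' hr' => hrt ▸ le_csSup hTbd ⟨r', hr', rfl⟩⟩

/-- The canonical op-concatenation built (right to left) from a concatenation `p`
of length `k`. -/
noncomputable def opc (R : Set Iv) (p : ℕ → Iv) (k : ℕ) : ℕ → Iv
  | 0 => p (k - 1)
  | 1 => pickMax {r | r ∈ R ∧ (p (k - 1)).1 < r.2 ∧ r.2 < (p (k - 1)).2}
  | (j + 2) => pickMax {r | r ∈ R ∧ (opc R p k (j + 1)).1 < r.2 ∧ r.2 ≤ (opc R p k j).1}

lemma opc_zero : opc R p k 0 = p (k - 1) := by rw [opc]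

lemma opc_eq_pickMax {j : ℕ} (hj : 1 ≤ j) :
    opc R p k j = pickMax (oWindow R (opc R p k) j) := by
  match j, hj with
  | 1, _ =>
    have h1 : oWindow R (opc R p k) 1 =
        {r | r ∈ R ∧ (p (k - 1)).1 < r.2 ∧ r.2 < (p (k - 1)).2} := by
      unfold oWindow
      rw [if_pos rfl, opc_zero]
    rw [h1, opc]
  | (j + 2), _ =>
    have h1 : oWindow R (opc R p k) (j + 2) =
        {r | r ∈ R ∧ (opc R p k (j + 1)).1 < r.2 ∧ r.2 ≤ (opc R p k j).1} := by
      unfold oWindow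
      rw [if_neg (by omega)]
      norm_num
    rw [h1, opc]

end Statement1Aux

section Statement1Main

variable {R : Set Iv} {k : ℕ} {p : ℕ → Iv}

/-- The key step: from membership, target-domination and the target upper bound,
derive the source bounds `S` and `U` of the invariant. -/
lemma opc_SU (hR : RelSet R) (hp : IsConcat R k p) {j : ℕ} (hj1 : 1 ≤ j) (hj : j < k)
    {x : Iv} (F1 : x ∈ R) (F2 : (p (k - 1 - j)).2 ≤ x.2) (F3 : x.2 < (p (k - j)).2) :
    (p (k - 1 - j)).1 ≤ x.1 ∧ (j + 2 ≤ k → x.1 < (p (k - 2 - j)).2) := by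
  have hmem1 : p (k - 1 - j) ∈ R := hp.mem (by omega)
  have hS : (p (k - 1 - j)).1 ≤ x.1 := by
    by_contra h
    push_neg at h
    exact absurd (hR.tgt_lt_of_src_lt F1 hmem1 h) (by omega)
  refine ⟨hS, fun h2 => ?_⟩
  by_contra hU
  push_neg at hU
  have hkj' : k - j < k := by omega
  rcases Nat.lt_or_ge x.1 (p (k - 1 - j)).2 with hc | hc
  · have hxw : x ∈ cWindow R p (k - j) := by
      unfold cWindow
      rw [if_neg (by omega)]
      refine ⟨F1, ?_, ?_⟩
      · rwa [show k - j - 2 = k - 2 - j from by omega]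
      · rwa [show k - j - 1 = k - 1 - j from by omega]
    have hmin := (hp.2 (k - j) (by omega) hkj').2 x hxw
    have := hR.src_lt_of_tgt_lt F1 (hp.mem hkj') F3
    omega
  · have h1 := hp.src_lt_tgt_pred (i := k - j) (by omega) hkj'
    rw [show k - j - 1 = k - 1 - j from by omega] at h1
    have := hR.tgt_lt_of_src_lt (hp.mem hkj') F1 (by omega)
    omega

/-- The master invariant for the canonical op-concatenation `opc R p k`:
membership in `R`, interleaving inequalities against `p`, and the
op-concatenation conditions. -/
lemma opc_inv (hR : RelSet R) (hp : IsConcat R k p) (hk : 1 ≤ k) :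
    ∀ j, j < k →
      (opc R p k j ∈ R) ∧
      ((p (k - 1 - j)).2 ≤ (opc R p k j).2) ∧
      (1 ≤ j → (opc R p k j).2 < (p (k - j)).2) ∧
      (j + 2 ≤ k → (opc R p k j).1 < (p (k - 2 - j)).2) ∧
      ((p (k - 1 - j)).1 ≤ (opc R p k j).1) ∧
      (1 ≤ j → opc R p k j ∈ oWindow R (opc R p k) j ∧
        ∀ r ∈ oWindow R (opc R p k) j, r.2 ≤ (opc R p k j).2) := by
  intro j
  induction j using Nat.strong_induction_on with
  | _ j ih =>
    intro hj
    rcases j with _ | (_ | j'')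
    · -- j = 0
      have h0 : opc R p k 0 = p (k - 1) := opc_zero
      refine ⟨?_, ?_, by intro h; exact absurd h (by omega), ?_, ?_,
        by intro h; exact absurd h (by omega)⟩
      · rw [h0]; exact hp.mem (by omega)
      · rw [h0]; simp
      · intro h2
        rw [h0]
        have h := hp.src_lt_tgt_pred (i := k - 1) (by omega) (by omega)
        have e : k - 1 - 1 = k - 2 := by omega
        rw [e] at h
        simpa using h
      · rw [h0]; simp
    · -- j = 1
      have hW : oWindow R (opc R p k) 1 =
          {r | r ∈ R ∧ (p (k - 1)).1 < r.2 ∧ r.2 < (p (k - 1)).2} := by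
        unfold oWindow
        rw [if_pos rfl, opc_zero]
      have hπ : p (k - 2) ∈ {r | r ∈ R ∧ (p (k - 1)).1 < r.2 ∧ r.2 < (p (k - 1)).2} := by
        refine ⟨hp.mem (by omega), ?_, ?_⟩
        · have h := hp.src_lt_tgt_pred (i := k - 1) (by omega) (by omega)
          rwa [show k - 1 - 1 = k - 2 from by omega] at h
        · have h := hp.tgt_succ_lt hR (i := k - 2) (by rw [show k - 2 + 1 = k - 1 from by omega]; omega)
          rwa [show k - 2 + 1 = k - 1 from by omega] at h
      have hbd : ∀ r ∈ {r | r ∈ R ∧ (p (k - 1)).1 < r.2 ∧ r.2 < (p (k - 1)).2},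
          r.2 ≤ (p (k - 1)).2 := fun r hr => le_of_lt hr.2.2
      have hpk : opc R p k 1 =
          pickMax {r | r ∈ R ∧ (p (k - 1)).1 < r.2 ∧ r.2 < (p (k - 1)).2} := by
        rw [opc_eq_pickMax le_rfl, hW]
      have hspec := pickMax_spec (exists_max ⟨_, hπ⟩ hbd)
      rw [← hpk] at hspec
      have F1 : opc R p k 1 ∈ R := hspec.1.1
      have F2 : (p (k - 1 - 1)).2 ≤ (opc R p k 1).2 := by
        have h := hspec.2 _ hπ
        rwa [show k - 1 - 1 = k - 2 from by omega]
      have F3 : (opc R p k 1).2 < (p (k - 1)).2 := hspec.1.2.2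
      have hSU := opc_SU hR hp (j := 1) le_rfl hj F1 F2 F3
      exact ⟨F1, F2, fun _ => F3, hSU.2, hSU.1,
        fun _ => ⟨by rw [hW]; exact hspec.1, fun r hr => hspec.2 r (by rw [hW] at hr; exact hr)⟩⟩
    · -- j = j'' + 2
      have hU1 := (ih (j'' + 1) (by omega) (by omega)).2.2.2.1 (by omega)
      have hS0 := (ih j'' (by omega) (by omega)).2.2.2.2.1
      have hU0 := (ih j'' (by omega) (by omega)).2.2.2.1 (by omega)
      have hW : oWindow R (opc R p k) (j'' + 2) =
          {r | r ∈ R ∧ (opc R p k (j'' + 1)).1 < r.2 ∧ r.2 ≤ (opc R p k j'').1} := by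
        unfold oWindow
        rw [if_neg (by omega)]
        norm_num
      have hπ : p (k - 1 - (j'' + 2)) ∈
          {r | r ∈ R ∧ (opc R p k (j'' + 1)).1 < r.2 ∧ r.2 ≤ (opc R p k j'').1} := by
        refine ⟨hp.mem (by omega), ?_, ?_⟩
        · rwa [show k - 2 - (j'' + 1) = k - 1 - (j'' + 2) from by omega] at hU1
        · have h := hp.tgt_pred2_le (i := k - 1 - j'') (by omega) (by omega)
          rw [show k - 1 - j'' - 2 = k - 1 - (j'' + 2) from by omega] at h
          omega
      have hbd : ∀ r ∈ {r | r ∈ R ∧ (opc R p k (j'' + 1)).1 < r.2 ∧ r.2 ≤ (opc R p k j'').1},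
          r.2 ≤ (opc R p k j'').1 := fun r hr => hr.2.2
      have hpk : opc R p k (j'' + 2) =
          pickMax {r | r ∈ R ∧ (opc R p k (j'' + 1)).1 < r.2 ∧ r.2 ≤ (opc R p k j'').1} := by
        rw [opc_eq_pickMax (by omega), hW]
      have hspec := pickMax_spec (exists_max ⟨_, hπ⟩ hbd)
      rw [← hpk] at hspec
      have F1 : opc R p k (j'' + 2) ∈ R := hspec.1.1
      have F2 : (p (k - 1 - (j'' + 2))).2 ≤ (opc R p k (j'' + 2)).2 := hspec.2 _ hπ
      have F3 : (opc R p k (j'' + 2)).2 < (p (k - (j'' + 2))).2 := by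
        have h := hspec.1.2.2
        rw [show k - 2 - j'' = k - (j'' + 2) from by omega] at hU0
        omega
      have hSU := opc_SU hR hp (j := j'' + 2) (by omega) hj F1 F2 F3
      exact ⟨F1, F2, fun _ => F3, hSU.2, hSU.1,
        fun _ => ⟨by rw [hW]; exact hspec.1, fun r hr => hspec.2 r (by rw [hW] at hr; exact hr)⟩⟩

/-- The canonical op-concatenation is an op-concatenation. -/
lemma opc_isOpConcat (hR : RelSet R) (hp : IsConcat R k p) (hk : 1 ≤ k) :
    IsOpConcat R k (opc R p k) :=
  ⟨by rw [opc_zero]; exact hp.mem (by omega),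
   fun i h1 h2 => (opc_inv hR hp hk i h2).2.2.2.2.2 h1⟩

/-- Sources of the canonical op-concatenation stay strictly left of `t(p_k)`. -/
lemma opc_src_lt (hR : RelSet R) (hp : IsConcat R k p) (hk : 1 ≤ k) {j : ℕ} (hj : j < k) :
    (opc R p k j).1 < (p (k - 1)).2 := by
  rcases Nat.eq_zero_or_pos j with rfl | hj1
  · rw [opc_zero]
    have := hR.len _ (hp.mem (i := k - 1) (by omega))
    omega
  · have hmem := (opc_inv hR hp hk j hj).1
    have hlen := hR.len _ hmem
    have hV := (opc_inv hR hp hk j hj).2.2.1 hj1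
    have := hp.tgt_mono hR (i := k - j) (j := k - 1) (by omega) (by omega)
    omega

lemma isSupport_of_concat (hp : IsConcat R k p) {n : ℕ} (h2 : 2 ≤ n) (hn : n - 1 ≤ k) :
    IsSupport R n ((p 0).1, (p (n - 2)).2) := by
  match n, h2 with
  | (N + 2), _ => exact ⟨p, hp.restrict (by omega), rfl, rfl⟩

lemma support_unique (hR : RelSet R) (hp : IsConcat R k p) {n : ℕ} (h2 : 2 ≤ n)
    (hn : n - 1 ≤ k) {x : ℕ} (h : IsSupport R n ((p 0).1, x)) : x = (p (n - 2)).2 := by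
  match n, h2 with
  | (N + 2), _ =>
    obtain ⟨p', hp', h0, hend⟩ := h
    have hend' : (p' N).2 = x := hend
    rw [← hend', concat_unique hR hp' hp h0 N (by omega) (by omega),
      show N + 2 - 2 = N from rfl]

lemma isOpSupport_of_op {q : ℕ → Iv} (hq : IsOpConcat R k q) {m : ℕ} (h2 : 2 ≤ m)
    (hm : m - 1 ≤ k) : IsOpSupport R m ((q (m - 2)).1, (q 0).2) := by
  match m, h2 with
  | (M + 2), _ => exact ⟨q, hq.restrict (by omega), rfl, rfl⟩

lemma opSupport_unique (hR : RelSet R) {q : ℕ → Iv} (hq : IsOpConcat R k q) {m : ℕ}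
    (h2 : 2 ≤ m) (hm : m - 1 ≤ k) {x e : ℕ} (he : (q 0).2 = e)
    (h : IsOpSupport R m (x, e)) : x = (q (m - 2)).1 := by
  match m, h2 with
  | (M + 2), _ =>
    obtain ⟨q', hq', hstart, hend⟩ := h
    have hstart' : (q' M).1 = x := hstart
    have hend' : (q' 0).2 = e := hend
    rw [← hstart', opconcat_unique hR hq' hq (by rw [hend', he]) M (by omega) (by omega),
      show M + 2 - 2 = M from rfl]

end Statement1Main

/-- **Lemma (particion) / Statement 1.** For `n, m ≥ 0` with `n + m ≥ 2`, any
support `w(p_1, …, p_{n+m-1}) ∈ AP_{n+m}` factors uniquely as `w = w' u w''`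
with `w' ∈ AP_n`, `w'' ∈ AP_m^{op}` and `u` a path (here: the interval
`[c.1, c.2]`).  Moreover, if `n, m ≥ 1` then `p_n = a u b` and `q^n = a' u b'`
with `a, a', b, b'` nontrivial, and hence `u ∉ I`. -/
theorem statement1 (R : Set Iv) (hR : RelSet R) (n m : ℕ) (hnm : 2 ≤ n + m)
    (p : ℕ → Iv) (hp : IsConcat R (n + m - 1) p) :
    ∃ c : Iv,
      ((p 0).1 ≤ c.1 ∧ c.1 ≤ c.2 ∧ c.2 ≤ (p (n + m - 2)).2 ∧
        IsSupport R n ((p 0).1, c.1) ∧ IsOpSupport R m (c.2, (p (n + m - 2)).2)) ∧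
      (∀ c' : Iv, (p 0).1 ≤ c'.1 → c'.1 ≤ c'.2 → c'.2 ≤ (p (n + m - 2)).2 →
        IsSupport R n ((p 0).1, c'.1) → IsOpSupport R m (c'.2, (p (n + m - 2)).2) →
        c' = c) ∧
      (1 ≤ n → 1 ≤ m →
        ((p (n - 1)).1 < c.1 ∧ c.2 < (p (n - 1)).2) ∧
        (∀ q : ℕ → Iv, IsOpConcat R (n + m - 1) q → (q (n + m - 2)).1 = (p 0).1 →
          (q 0).2 = (p (n + m - 2)).2 → (q (m - 1)).1 < c.1 ∧ c.2 < (q (m - 1)).2) ∧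
        ∀ r ∈ R, ¬(c.1 ≤ r.1 ∧ r.2 ≤ c.2)) := by
  have hk1 : 1 ≤ n + m - 1 := by omega
  have hinv := opc_inv hR hp hk1
  have hop : IsOpConcat R (n + m - 1) (opc R p (n + m - 1)) := opc_isOpConcat hR hp hk1
  have hq0 : opc R p (n + m - 1) 0 = p (n + m - 1 - 1) := opc_zero
  set q : ℕ → Iv := opc R p (n + m - 1) with hqd
  obtain rfl | rfl | hn2 : n = 0 ∨ n = 1 ∨ 2 ≤ n := by omega
  · -- n = 0, m ≥ 2
      have hm2 : 2 ≤ m := by omega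
      have hkm2 : m - 2 < 0 + m - 1 := by omega
      have hS := (hinv (m - 2) hkm2).2.2.2.2.1
      rw [show 0 + m - 1 - 1 - (m - 2) = 0 from by omega] at hS
      have hc2lt : (q (m - 2)).1 < (p (0 + m - 2)).2 := by
        have h := opc_src_lt hR hp hk1 (j := m - 2) hkm2
        rwa [show 0 + m - 1 - 1 = 0 + m - 2 from by omega] at h
      have hqe : (q 0).2 = (p (0 + m - 2)).2 := by
        rw [hq0, show 0 + m - 1 - 1 = 0 + m - 2 from by omega]
      refine ⟨((p 0).1, (q (m - 2)).1), ⟨le_rfl, hS, le_of_lt hc2lt, rfl, ?_⟩, ?_, ?_⟩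
      · have h := isOpSupport_of_op hop hm2 (by omega)
        rwa [hqe] at h
      · rintro ⟨c1', c2'⟩ h1 h2 h3 h4 h5
        simp only [Prod.mk.injEq]
        have h4' : c1' = (p 0).1 := h4
        exact ⟨h4', opSupport_unique hR hop hm2 (by omega) hqe h5⟩
      · intro h _
        exact absurd h (by omega)
  · -- n = 1
    obtain rfl | rfl | hm2 : m = 0 ∨ m = 1 ∨ 2 ≤ m := by omega
    · exact absurd hnm (by omega)
    · -- n = 1, m = 1
      have hlen : (p 0).1 + 2 ≤ (p 0).2 := hR.len _ hp.1
      have hidx : (1:ℕ) + 1 - 2 = 0 := rfl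
      refine ⟨((p 0).1 + 1, (p 0).2 - 1), ⟨by omega, by omega, ?_, rfl, ?_⟩, ?_, ?_⟩
      · rw [hidx]; omega
      · show (p (1 + 1 - 2)).2 = (p 0).2 - 1 + 1
        rw [hidx]; omega
      · rintro ⟨c1', c2'⟩ h1 h2 h3 h4 h5
        simp only [Prod.mk.injEq]
        have h4' : c1' = (p 0).1 + 1 := h4
        have h5' : (p (1 + 1 - 2)).2 = c2' + 1 := h5
        rw [hidx] at h5'
        exact ⟨h4', by omega⟩
      · intro _ _
        refine ⟨⟨?_, ?_⟩, ?_, ?_⟩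
        · rw [show (1:ℕ) - 1 = 0 from rfl]; omega
        · rw [show (1:ℕ) - 1 = 0 from rfl]; omega
        · intro q' hq' hq's hq'e
          have e : q' 0 = p 0 := hR.tgt_inj (hq'.mem (by omega)) (hp.mem (by omega))
            (by rw [hq'e, hidx])
          rw [show (1:ℕ) - 1 = 0 from rfl, e]
          omega
        · rintro r hr ⟨hr1, hr2⟩
          have e := hR.nodiv (p 0) hp.1 r hr (by omega) (by omega)
          have := congrArg Prod.fst e
          omega
    · -- n = 1, m ≥ 2
      have hkm2 : m - 2 < 1 + m - 1 := by omega
      have hkm1 : m - 1 < 1 + m - 1 := by omega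
      have hS := (hinv (m - 2) hkm2).2.2.2.2.1
      rw [show 1 + m - 1 - 1 - (m - 2) = 1 from by omega] at hS
      have h01 := hp.src0_lt (by omega)
      have hU := (hinv (m - 2) hkm2).2.2.2.1 (by omega)
      rw [show 1 + m - 1 - 2 - (m - 2) = 0 from by omega] at hU
      have hc2lt : (q (m - 2)).1 < (p (1 + m - 2)).2 := by
        have h := opc_src_lt hR hp hk1 (j := m - 2) hkm2
        rwa [show 1 + m - 1 - 1 = 1 + m - 2 from by omega] at h
      have hqe : (q 0).2 = (p (1 + m - 2)).2 := by
        rw [hq0, show 1 + m - 1 - 1 = 1 + m - 2 from by omega]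
      have hqlast : (q (m - 2)).1 < (q (m - 1)).2 := by
        have h := hop.tgt_gt_src_pred (i := m - 1) (by omega) hkm1
        rwa [show m - 1 - 1 = m - 2 from by omega] at h
      refine ⟨((p 0).1 + 1, (q (m - 2)).1),
        ⟨by omega, by omega, le_of_lt hc2lt, rfl, ?_⟩, ?_, ?_⟩
      · have h := isOpSupport_of_op hop hm2 (by omega)
        rwa [hqe] at h
      · rintro ⟨c1', c2'⟩ h1 h2 h3 h4 h5
        simp only [Prod.mk.injEq]
        have h4' : c1' = (p 0).1 + 1 := h4
        exact ⟨h4', opSupport_unique hR hop hm2 (by omega) hqe h5⟩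
      · intro _ _
        refine ⟨⟨?_, ?_⟩, ?_, ?_⟩
        · rw [show (1:ℕ) - 1 = 0 from rfl]; omega
        · rw [show (1:ℕ) - 1 = 0 from rfl]; exact hU
        · intro q' hq' hq's hq'e
          rw [show 1 + m - 2 = m - 1 from by omega] at hq's
          have heq := opconcat_unique hR hq' hop (by rw [hq'e, hqe]) (m - 1) hkm1 hkm1
          constructor
          · rw [hq's]; omega
          · rw [heq]; exact hqlast
        · rintro r hr ⟨hr1, hr2⟩
          have e := hR.nodiv (p 0) hp.1 r hr (by omega) (by omega)
          have := congrArg Prod.fst e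
          omega
  · obtain rfl | rfl | hm2 : m = 0 ∨ m = 1 ∨ 2 ≤ m := by omega
    · -- n ≥ 2, m = 0
      have hidx : n + 0 - 2 = n - 2 := by omega
      refine ⟨((p (n - 2)).2, (p (n + 0 - 2)).2),
        ⟨?_, le_of_eq (by rw [hidx]), le_rfl, ?_, ?_⟩, ?_, ?_⟩
      · have h1 := hR.len _ (hp.mem (i := 0) (by omega))
        have h2 := hp.tgt_mono hR (i := 0) (j := n - 2) (by omega) (by omega)
        omega
      · exact isSupport_of_concat hp hn2 (by omega)
      · rfl
      · rintro ⟨c1', c2'⟩ h1 h2 h3 h4 h5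
        simp only [Prod.mk.injEq]
        have h5' : (p (n + 0 - 2)).2 = c2' := h5
        exact ⟨support_unique hR hp hn2 (by omega) h4, h5'.symm⟩
      · intro _ h
        exact absurd h (by omega)
    · -- n ≥ 2, m = 1
      have hidx : n + 1 - 2 = n - 1 := by omega
      have hlen : (p (n - 1)).1 + 2 ≤ (p (n - 1)).2 := hR.len _ (hp.mem (by omega))
      have hsucc : (p (n - 2)).2 < (p (n - 1)).2 := by
        have h := hp.tgt_succ_lt hR (i := n - 2) (by omega)
        rwa [show n - 2 + 1 = n - 1 from by omega] at h
      have hi : (p (n - 1)).1 < (p (n - 2)).2 := by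
        have h := hp.src_lt_tgt_pred (i := n - 1) (by omega) (by omega)
        rwa [show n - 1 - 1 = n - 2 from by omega] at h
      refine ⟨((p (n - 2)).2, (p (n - 1)).2 - 1),
        ⟨?_, by omega, by rw [hidx]; omega, ?_, ?_⟩, ?_, ?_⟩
      · have h1 := hR.len _ (hp.mem (i := 0) (by omega))
        have h2 := hp.tgt_mono hR (i := 0) (j := n - 2) (by omega) (by omega)
        omega
      · exact isSupport_of_concat hp hn2 (by omega)
      · show (p (n + 1 - 2)).2 = (p (n - 1)).2 - 1 + 1
        rw [hidx]; omega
      · rintro ⟨c1', c2'⟩ h1 h2 h3 h4 h5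
        simp only [Prod.mk.injEq]
        have h5' : (p (n + 1 - 2)).2 = c2' + 1 := h5
        rw [hidx] at h5'
        exact ⟨support_unique hR hp hn2 (by omega) h4, by omega⟩
      · intro _ _
        refine ⟨⟨hi, by omega⟩, ?_, ?_⟩
        · intro q' hq' hq's hq'e
          have e : q' (1 - 1) = p (n - 1) := by
            rw [show (1:ℕ) - 1 = 0 from rfl]
            exact hR.tgt_inj (hq'.mem (by omega)) (hp.mem (by omega)) (by rw [hq'e, hidx])
          rw [e]
          exact ⟨hi, by omega⟩
        · rintro r hr ⟨hr1, hr2⟩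
          have e := hR.nodiv (p (n - 1)) (hp.mem (by omega)) r hr (by omega) (by omega)
          have := congrArg Prod.fst e
          omega
    · -- n ≥ 2, m ≥ 2
      have hkm2 : m - 2 < n + m - 1 := by omega
      have hkm1 : m - 1 < n + m - 1 := by omega
      have hS := (hinv (m - 2) hkm2).2.2.2.2.1
      rw [show n + m - 1 - 1 - (m - 2) = n from by omega] at hS
      have hU := (hinv (m - 2) hkm2).2.2.2.1 (by omega)
      rw [show n + m - 1 - 2 - (m - 2) = n - 1 from by omega] at hU
      have hL : (p (n - 2)).2 ≤ (p n).1 := hp.tgt_pred2_le (i := n) hn2 (by omega)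
      have hc2lt : (q (m - 2)).1 < (p (n + m - 2)).2 := by
        have h := opc_src_lt hR hp hk1 (j := m - 2) hkm2
        rwa [show n + m - 1 - 1 = n + m - 2 from by omega] at h
      have hi : (p (n - 1)).1 < (p (n - 2)).2 := by
        have h := hp.src_lt_tgt_pred (i := n - 1) (by omega) (by omega)
        rwa [show n - 1 - 1 = n - 2 from by omega] at h
      have hqlast : (q (m - 2)).1 < (q (m - 1)).2 := by
        have h := hop.tgt_gt_src_pred (i := m - 1) (by omega) hkm1
        rwa [show m - 1 - 1 = m - 2 from by omega] at h
      have hqe : (q 0).2 = (p (n + m - 2)).2 := by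
        rw [hq0, show n + m - 1 - 1 = n + m - 2 from by omega]
      refine ⟨((p (n - 2)).2, (q (m - 2)).1), ⟨?_, by omega, le_of_lt hc2lt, ?_, ?_⟩, ?_, ?_⟩
      · have h1 := hR.len _ (hp.mem (i := 0) (by omega))
        have h2 := hp.tgt_mono hR (i := 0) (j := n - 2) (by omega) (by omega)
        omega
      · exact isSupport_of_concat hp hn2 (by omega)
      · have h := isOpSupport_of_op hop hm2 (by omega)
        rwa [hqe] at h
      · rintro ⟨c1', c2'⟩ h1 h2 h3 h4 h5
        simp only [Prod.mk.injEq]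
        exact ⟨support_unique hR hp hn2 (by omega) h4,
          opSupport_unique hR hop hm2 (by omega) hqe h5⟩
      · intro _ _
        refine ⟨⟨hi, hU⟩, ?_, ?_⟩
        · intro q' hq' hq's hq'e
          have heq := opconcat_unique hR hq' hop (by rw [hq'e, hqe]) (m - 1) hkm1 hkm1
          rw [heq]
          constructor
          · have hU1 := (hinv (m - 1) hkm1).2.2.2.1 (by omega)
            rwa [show n + m - 1 - 2 - (m - 1) = n - 2 from by omega] at hU1
          · exact hqlast
        · rintro r hr ⟨hr1, hr2⟩
          have e := hR.nodiv (p (n - 1)) (hp.mem (by omega)) r hr (by omega) (by omega)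
          have := congrArg Prod.fst e
          omega


end Paper
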